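/- Let A ∈ ℝ^{n×N}, τ, λ > 0, Y ∈ ℝ^{n×m}, and L ≥ 2. Then for any orthogonal matrices Φ₁, Φ₂ ∈ O(N), the outputs of the L-layer unfolded ISTA networks satisfy ‖f_{Φ₁}^L(Y) − f_{Φ₂}^L(Y)‖_F ≤ K_L · ‖AΦ₁ − AΦ₂‖_{2→2}, where K_L = τ‖Y‖_F·‖I − τAᵀA‖_{2→2}^{L−1} + τ‖Y‖_F · Σ_{l=2}^{L} ‖I − τAᵀA‖_{2→2}^{L−l} · (1 + 2τ‖A‖²_{2→2} · Σ_{k=0}^{l−2} ‖I − τAᵀA‖_{2→2}^k). -/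

import Mathlib

open MeasureTheory Matrix
open scoped ENNReal

noncomputable def soft (mu x : ℝ) : ℝ := Real.sign x * max 0 (|x| - mu)

noncomputable def softMat {a b : ℕ} (mu : ℝ) (M : Matrix (Fin a) (Fin b) ℝ) :
    Matrix (Fin a) (Fin b) ℝ := Matrix.of fun i j => soft mu (M i j)

noncomputable def specNorm {a b : ℕ} (A : Matrix (Fin a) (Fin b) ℝ) : ℝ :=
  ‖LinearMap.toContinuousLinearMap (Matrix.toEuclideanLin A)‖

noncomputable def frobNorm {a b : ℕ} (A : Matrix (Fin a) (Fin b) ℝ) : ℝ :=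
  Real.sqrt (∑ i, ∑ j, (A i j) ^ 2)

noncomputable def l2 {N : ℕ} (x : Fin N → ℝ) : ℝ := Real.sqrt (∑ i, x i ^ 2)

noncomputable def sigma {N : ℕ} (B : ℝ) (x : Fin N → ℝ) : Fin N → ℝ :=
  if l2 x ≤ B then x else (B / l2 x) • x

noncomputable def sigmaMat {N m : ℕ} (B : ℝ) (M : Matrix (Fin N) (Fin m) ℝ) :
    Matrix (Fin N) (Fin m) ℝ := Matrix.of fun i j => sigma B (fun k => M k j) i

def IsOrthogonal {N : ℕ} (Φ : Matrix (Fin N) (Fin N) ℝ) : Prop := Φᵀ * Φ = 1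

noncomputable def ista {n N m : ℕ} (A : Matrix (Fin n) (Fin N) ℝ) (τ lam : ℝ)
    (Φ : Matrix (Fin N) (Fin N) ℝ) (Y : Matrix (Fin n) (Fin m) ℝ) :
    ℕ → Matrix (Fin N) (Fin m) ℝ
  | 0 => 0
  | l + 1 => softMat (τ * lam)
      ((1 - τ • (Φᵀ * Aᵀ * A * Φ)) * ista A τ lam Φ Y l + τ • ((A * Φ)ᵀ * Y))

noncomputable def istaVec {n N : ℕ} (A : Matrix (Fin n) (Fin N) ℝ) (τ lam : ℝ)
    (Φ : Matrix (Fin N) (Fin N) ℝ) (y : Fin n → ℝ) : ℕ → Fin N → ℝ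
  | 0 => 0
  | l + 1 => soft (τ * lam) ∘
      ((1 - τ • (Φᵀ * Aᵀ * A * Φ)) *ᵥ istaVec A τ lam Φ y l + τ • ((A * Φ)ᵀ *ᵥ y))

noncomputable def KL {n N m : ℕ} (A : Matrix (Fin n) (Fin N) ℝ) (τ : ℝ)
    (Y : Matrix (Fin n) (Fin m) ℝ) (L : ℕ) : ℝ :=
  τ * frobNorm Y * specNorm (1 - τ • (Aᵀ * A)) ^ (L - 1)
    + τ * frobNorm Y * ∑ l ∈ Finset.Icc 2 L,
        specNorm (1 - τ • (Aᵀ * A)) ^ (L - l) *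
          (1 + 2 * τ * specNorm A ^ 2 *
            ∑ k ∈ Finset.range (l - 1), specNorm (1 - τ • (Aᵀ * A)) ^ k)

noncomputable def ML {n N m : ℕ} (A : Matrix (Fin n) (Fin N) ℝ) (τ : ℝ)
    (Y : Matrix (Fin n) (Fin m) ℝ) (L : ℕ) : ℝ :=
  τ * specNorm A * frobNorm Y * ∑ k ∈ Finset.range L, specNorm (1 - τ • (Aᵀ * A)) ^ k

noncomputable def coveringNumber {α : Type*} (d : α → α → ℝ) (s : Set α) (ε : ℝ) : ℝ≥0∞ :=
  ⨅ (t : Finset α) (_ : ∀ x ∈ s, ∃ y ∈ t, d x y ≤ ε), (t.card : ℝ≥0∞)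

-- soft lemmas
lemma soft_eq {mu : ℝ} (hmu : 0 ≤ mu) (x : ℝ) :
    soft mu x = x - max (-mu) (min mu x) := by
  unfold soft
  rcases lt_trichotomy x 0 with h | h | h
  · rw [Real.sign_of_neg h, abs_of_neg h]
    rw [max_def, max_def, min_def]
    split_ifs <;> linarith
  · simp [h, Real.sign_zero]
    rw [max_def, min_def]
    split_ifs <;> linarith
  · rw [Real.sign_of_pos h, abs_of_pos h]
    rw [max_def, max_def, min_def]
    split_ifs <;> linarith

lemma soft_lip {mu : ℝ} (hmu : 0 ≤ mu) (a b : ℝ) :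
    |soft mu a - soft mu b| ≤ |a - b| := by
  rw [soft_eq hmu, soft_eq hmu]
  rcases le_total a b with h | h
  · have hr : |a - b| = b - a := by rw [abs_sub_comm, abs_of_nonneg (by linarith)]
    rw [hr, abs_le]
    constructor <;>
    · rw [max_def, max_def, min_def, min_def]
      split_ifs <;> linarith
  · have hr : |a - b| = a - b := abs_of_nonneg (by linarith)
    rw [hr, abs_le]
    constructor <;>
    · rw [max_def, max_def, min_def, min_def]
      split_ifs <;> linarith
lemma soft_zero2 {mu : ℝ} : soft mu 0 = 0 := by simp [soft]
-- frobNorm basic lemmas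
lemma frobNorm_nonneg {a b : ℕ} (A : Matrix (Fin a) (Fin b) ℝ) : 0 ≤ frobNorm A :=
  Real.sqrt_nonneg _

section Frob
attribute [local instance] Matrix.frobeniusSeminormedAddCommGroup
  Matrix.frobeniusNormedSpace

lemma frobNorm_eq_norm {a b : ℕ} (A : Matrix (Fin a) (Fin b) ℝ) : frobNorm A = ‖A‖ := by
  rw [Matrix.frobenius_norm_def, ← Real.sqrt_eq_rpow]
  unfold frobNorm
  congr 1
  refine Finset.sum_congr rfl fun i _ => Finset.sum_congr rfl fun j _ => ?_
  rw [show ((2:ℝ)) = ((2:ℕ):ℝ) by norm_num, Real.rpow_natCast, Real.norm_eq_abs, sq_abs]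

lemma frobNorm_add_le {a b : ℕ} (A B : Matrix (Fin a) (Fin b) ℝ) :
    frobNorm (A + B) ≤ frobNorm A + frobNorm B := by
  simp only [frobNorm_eq_norm]; exact norm_add_le A B

lemma frobNorm_smul {a b : ℕ} (c : ℝ) (A : Matrix (Fin a) (Fin b) ℝ) :
    frobNorm (c • A) = |c| * frobNorm A := by
  simp only [frobNorm_eq_norm]
  rw [norm_smul, Real.norm_eq_abs]

end Frob

lemma frobNorm_mono {a b : ℕ} {A B : Matrix (Fin a) (Fin b) ℝ}
    (h : ∀ i j, |A i j| ≤ |B i j|) : frobNorm A ≤ frobNorm B := by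
  apply Real.sqrt_le_sqrt
  apply Finset.sum_le_sum; intro i _
  apply Finset.sum_le_sum; intro j _
  rw [← sq_abs (A i j), ← sq_abs (B i j)]
  exact pow_le_pow_left₀ (abs_nonneg _) (h i j) 2
-- specNorm lemmas
lemma specNorm_nonneg {a b : ℕ} (A : Matrix (Fin a) (Fin b) ℝ) : 0 ≤ specNorm A :=
  norm_nonneg _

section Spec
open scoped Matrix.Norms.L2Operator

lemma specNorm_eq_norm {a b : ℕ} (A : Matrix (Fin a) (Fin b) ℝ) : specNorm A = ‖A‖ := by
  rw [Matrix.l2_opNorm_def]; rfl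

lemma specNorm_mul_le {a b c : ℕ} (A : Matrix (Fin a) (Fin b) ℝ) (B : Matrix (Fin b) (Fin c) ℝ) :
    specNorm (A * B) ≤ specNorm A * specNorm B := by
  simp only [specNorm_eq_norm]; exact Matrix.l2_opNorm_mul A B

lemma specNorm_transpose {a b : ℕ} (A : Matrix (Fin a) (Fin b) ℝ) :
    specNorm Aᵀ = specNorm A := by
  have h : Aᴴ = Aᵀ := by ext i j; simp [Matrix.conjTranspose_apply]
  simp only [specNorm_eq_norm]
  rw [← h]; exact Matrix.l2_opNorm_conjTranspose A

lemma specNorm_add_le {a b : ℕ} (A B : Matrix (Fin a) (Fin b) ℝ) :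
    specNorm (A + B) ≤ specNorm A + specNorm B := by
  simp only [specNorm_eq_norm]; exact norm_add_le A B

lemma specNorm_neg {a b : ℕ} (A : Matrix (Fin a) (Fin b) ℝ) : specNorm (-A) = specNorm A := by
  simp only [specNorm_eq_norm]; exact norm_neg A

lemma specNorm_smul {a b : ℕ} (c : ℝ) (A : Matrix (Fin a) (Fin b) ℝ) :
    specNorm (c • A) = |c| * specNorm A := by
  simp only [specNorm_eq_norm]
  rw [norm_smul, Real.norm_eq_abs]

lemma l2_eq_norm {b : ℕ} (x : Fin b → ℝ) :
    l2 x = ‖(WithLp.equiv 2 (Fin b → ℝ)).symm x‖ := by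
  rw [EuclideanSpace.norm_eq]
  unfold l2
  congr 1
  refine Finset.sum_congr rfl fun i _ => ?_
  rw [show ((WithLp.equiv 2 (Fin b → ℝ)).symm x).ofLp i = x i from rfl, Real.norm_eq_abs, sq_abs]

lemma l2_mulVec_le {a b : ℕ} (A : Matrix (Fin a) (Fin b) ℝ) (x : Fin b → ℝ) :
    l2 (A *ᵥ x) ≤ specNorm A * l2 x := by
  rw [l2_eq_norm, l2_eq_norm, specNorm_eq_norm]
  exact Matrix.l2_opNorm_mulVec A ((WithLp.equiv 2 (Fin b → ℝ)).symm x)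

lemma specNorm_le_bound {a b : ℕ} (A : Matrix (Fin a) (Fin b) ℝ) {c : ℝ} (hc : 0 ≤ c)
    (h : ∀ x : Fin b → ℝ, l2 (A *ᵥ x) ≤ c * l2 x) : specNorm A ≤ c := by
  apply ContinuousLinearMap.opNorm_le_bound _ hc
  intro x
  have := h ((WithLp.equiv 2 (Fin b → ℝ)) x)
  rw [l2_eq_norm, l2_eq_norm] at this
  simpa [Matrix.toEuclideanLin_apply] using this

end Spec
lemma softMat_lip {a b : ℕ} {mu : ℝ} (hmu : 0 ≤ mu) (X Y : Matrix (Fin a) (Fin b) ℝ) :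
    frobNorm (softMat mu X - softMat mu Y) ≤ frobNorm (X - Y) := by
  apply frobNorm_mono
  intro i j
  have h1 : (softMat mu X - softMat mu Y) i j = soft mu (X i j) - soft mu (Y i j) := rfl
  have h2 : (X - Y) i j = X i j - Y i j := rfl
  rw [h1, h2]
  exact soft_lip hmu _ _

lemma softMat_frob_le {a b : ℕ} {mu : ℝ} (hmu : 0 ≤ mu) (X : Matrix (Fin a) (Fin b) ℝ) :
    frobNorm (softMat mu X) ≤ frobNorm X := by
  have h0 : softMat mu (0 : Matrix (Fin a) (Fin b) ℝ) = 0 := by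
    ext i j; simp [softMat, soft]
  have := softMat_lip hmu X 0
  rw [h0, sub_zero, sub_zero] at this
  exact this

lemma l2_sq {b : ℕ} (x : Fin b → ℝ) : l2 x ^ 2 = ∑ i, x i ^ 2 :=
  Real.sq_sqrt (Finset.sum_nonneg fun i _ => sq_nonneg _)

lemma frobNorm_mul_le {a b c : ℕ} (M : Matrix (Fin a) (Fin b) ℝ) (X : Matrix (Fin b) (Fin c) ℝ) :
    frobNorm (M * X) ≤ specNorm M * frobNorm X := by
  unfold frobNorm
  conv_lhs => rw [Finset.sum_comm]
  conv_rhs => rw [Finset.sum_comm]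
  have key : ∀ j : Fin c, ∑ i, ((M * X) i j) ^ 2 ≤ specNorm M ^ 2 * ∑ i, (X i j) ^ 2 := by
    intro j
    have h1 : ∑ i, ((M * X) i j) ^ 2 = l2 (M *ᵥ (fun k => X k j)) ^ 2 := by
      rw [l2_sq]
      exact Finset.sum_congr rfl fun i _ => rfl
    rw [h1, ← l2_sq]
    calc l2 (M *ᵥ fun k => X k j) ^ 2 ≤ (specNorm M * l2 fun k => X k j) ^ 2 := by
          apply pow_le_pow_left₀ (Real.sqrt_nonneg _) (l2_mulVec_le M _)
      _ = specNorm M ^ 2 * l2 (fun k => X k j) ^ 2 := by ring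
  calc Real.sqrt (∑ j, ∑ i, ((M * X) i j) ^ 2)
      ≤ Real.sqrt (∑ j, specNorm M ^ 2 * ∑ i, (X i j) ^ 2) :=
        Real.sqrt_le_sqrt (Finset.sum_le_sum fun j _ => key j)
    _ = specNorm M * Real.sqrt (∑ j, ∑ i, (X i j) ^ 2) := by
        rw [← Finset.mul_sum, Real.sqrt_mul (sq_nonneg _)]
        try rw [Real.sqrt_sq (specNorm_nonneg M)]

lemma l2_mulVec_orth {N : ℕ} {Φ : Matrix (Fin N) (Fin N) ℝ} (h : Φᵀ * Φ = 1)
    (x : Fin N → ℝ) : l2 (Φ *ᵥ x) = l2 x := by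
  unfold l2
  congr 1
  have e : ∀ y : Fin N → ℝ, ∑ i, y i ^ 2 = y ⬝ᵥ y := by
    intro y; simp [dotProduct, sq]
  rw [e, e, Matrix.dotProduct_mulVec]
  rw [← Matrix.mulVec_transpose, Matrix.mulVec_mulVec, h, Matrix.one_mulVec]

lemma specNorm_orth_le_one {N : ℕ} {Φ : Matrix (Fin N) (Fin N) ℝ} (h : Φᵀ * Φ = 1) :
    specNorm Φ ≤ 1 :=
  specNorm_le_bound Φ zero_le_one fun x => by rw [l2_mulVec_orth h, one_mul]

lemma orth_transpose {N : ℕ} {Φ : Matrix (Fin N) (Fin N) ℝ} (h : Φᵀ * Φ = 1) :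
    Φᵀᵀ * Φᵀ = 1 := by
  rw [Matrix.transpose_transpose, mul_eq_one_comm.mp h]

lemma conj_eq {n N : ℕ} (A : Matrix (Fin n) (Fin N) ℝ) (τ : ℝ)
    {Φ : Matrix (Fin N) (Fin N) ℝ} (h : Φᵀ * Φ = 1) :
    1 - τ • (Φᵀ * Aᵀ * A * Φ) = Φᵀ * (1 - τ • (Aᵀ * A)) * Φ := by
  rw [Matrix.mul_sub, Matrix.sub_mul, Matrix.mul_one, h]
  congr 1
  rw [Matrix.mul_smul, Matrix.smul_mul]
  congr 1
  simp only [Matrix.mul_assoc]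

lemma specNorm_conj_le {n N : ℕ} (A : Matrix (Fin n) (Fin N) ℝ) (τ : ℝ)
    {Φ : Matrix (Fin N) (Fin N) ℝ} (h : Φᵀ * Φ = 1) :
    specNorm (1 - τ • (Φᵀ * Aᵀ * A * Φ)) ≤ specNorm (1 - τ • (Aᵀ * A)) := by
  rw [conj_eq A τ h]
  have h1 := specNorm_mul_le (Φᵀ * (1 - τ • (Aᵀ * A))) Φ
  have h2 := specNorm_mul_le Φᵀ (1 - τ • (Aᵀ * A))
  have h3 := specNorm_orth_le_one h
  have h4 := specNorm_orth_le_one (orth_transpose h)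
  have h5 := specNorm_nonneg (1 - τ • (Aᵀ * A))
  have h6 := specNorm_nonneg Φ
  have h7 := specNorm_nonneg Φᵀ
  have h8 := specNorm_nonneg (Φᵀ * (1 - τ • (Aᵀ * A)))
  nlinarith

lemma specNorm_mulOrth_le {n N : ℕ} (A : Matrix (Fin n) (Fin N) ℝ)
    {Φ : Matrix (Fin N) (Fin N) ℝ} (h : Φᵀ * Φ = 1) :
    specNorm (A * Φ) ≤ specNorm A := by
  have h1 := specNorm_mul_le A Φ
  have h3 := specNorm_orth_le_one h
  have h5 := specNorm_nonneg A
  nlinarith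

lemma frobNorm_zero {a b : ℕ} : frobNorm (0 : Matrix (Fin a) (Fin b) ℝ) = 0 := by
  simp [frobNorm]

lemma ista_frob_le {n N m : ℕ} (A : Matrix (Fin n) (Fin N) ℝ) {τ lam : ℝ}
    (hτ : 0 ≤ τ) (hlam : 0 ≤ lam) (Y : Matrix (Fin n) (Fin m) ℝ)
    {Φ : Matrix (Fin N) (Fin N) ℝ} (hΦ : Φᵀ * Φ = 1) (l : ℕ) :
    frobNorm (ista A τ lam Φ Y l) ≤
      τ * specNorm A * frobNorm Y *
        ∑ k ∈ Finset.range l, specNorm (1 - τ • (Aᵀ * A)) ^ k := by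
  induction l with
  | zero => simp [ista, frobNorm_zero]
  | succ l ih =>
    set ρ := specNorm (1 - τ • (Aᵀ * A)) with hρ
    set α := specNorm A with hα
    set F := frobNorm Y with hF
    have hρ0 : 0 ≤ ρ := specNorm_nonneg _
    have hα0 : 0 ≤ α := specNorm_nonneg _
    have hF0 : 0 ≤ F := frobNorm_nonneg _
    have hsum0 : 0 ≤ ∑ k ∈ Finset.range l, ρ ^ k :=
      Finset.sum_nonneg fun k _ => pow_nonneg hρ0 k
    have hmu : 0 ≤ τ * lam := mul_nonneg hτ hlam
    show frobNorm (softMat (τ * lam) _) ≤ _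
    calc frobNorm (softMat (τ * lam)
          ((1 - τ • (Φᵀ * Aᵀ * A * Φ)) * ista A τ lam Φ Y l + τ • ((A * Φ)ᵀ * Y)))
        ≤ frobNorm ((1 - τ • (Φᵀ * Aᵀ * A * Φ)) * ista A τ lam Φ Y l + τ • ((A * Φ)ᵀ * Y)) :=
          softMat_frob_le hmu _
      _ ≤ frobNorm ((1 - τ • (Φᵀ * Aᵀ * A * Φ)) * ista A τ lam Φ Y l)
            + frobNorm (τ • ((A * Φ)ᵀ * Y)) := frobNorm_add_le _ _
      _ ≤ ρ * (τ * α * F * ∑ k ∈ Finset.range l, ρ ^ k) + τ * α * F := by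
          gcongr ?h₁ + ?h₂
          case h₁ =>
            calc frobNorm ((1 - τ • (Φᵀ * Aᵀ * A * Φ)) * ista A τ lam Φ Y l)
                ≤ specNorm (1 - τ • (Φᵀ * Aᵀ * A * Φ)) * frobNorm (ista A τ lam Φ Y l) :=
                  frobNorm_mul_le _ _
              _ ≤ ρ * (τ * α * F * ∑ k ∈ Finset.range l, ρ ^ k) := by
                  apply mul_le_mul (specNorm_conj_le A τ hΦ) ih (frobNorm_nonneg _) hρ0
          case h₂ =>
            calc frobNorm (τ • ((A * Φ)ᵀ * Y)) = |τ| * frobNorm ((A * Φ)ᵀ * Y) :=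
                  frobNorm_smul _ _
              _ ≤ τ * (α * F) := by
                  rw [abs_of_nonneg hτ]
                  apply mul_le_mul_of_nonneg_left _ hτ
                  calc frobNorm ((A * Φ)ᵀ * Y) ≤ specNorm (A * Φ)ᵀ * F := frobNorm_mul_le _ _
                    _ ≤ α * F := by
                        apply mul_le_mul_of_nonneg_right _ hF0
                        rw [specNorm_transpose]
                        exact specNorm_mulOrth_le A hΦ
              _ = τ * α * F := by ring
      _ = τ * α * F * ∑ k ∈ Finset.range (l + 1), ρ ^ k := by
          rw [geom_sum_succ]
          ring
lemma W_diff_le {n N : ℕ} (A : Matrix (Fin n) (Fin N) ℝ) {τ : ℝ} (hτ : 0 ≤ τ)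
    {Φ₁ Φ₂ : Matrix (Fin N) (Fin N) ℝ} (h₁ : Φ₁ᵀ * Φ₁ = 1) (h₂ : Φ₂ᵀ * Φ₂ = 1) :
    specNorm ((1 - τ • (Φ₁ᵀ * Aᵀ * A * Φ₁)) - (1 - τ • (Φ₂ᵀ * Aᵀ * A * Φ₂))) ≤
      2 * τ * specNorm A * specNorm (A * Φ₁ - A * Φ₂) := by
  set B₁ := A * Φ₁ with hB₁
  set B₂ := A * Φ₂ with hB₂
  have hC : ∀ Φ : Matrix (Fin N) (Fin N) ℝ, Φᵀ * Aᵀ * A * Φ = (A * Φ)ᵀ * (A * Φ) := by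
    intro Φ
    rw [Matrix.transpose_mul]
    simp only [Matrix.mul_assoc]
  have e1 : (1 - τ • (Φ₁ᵀ * Aᵀ * A * Φ₁)) - (1 - τ • (Φ₂ᵀ * Aᵀ * A * Φ₂))
      = τ • (B₂ᵀ * B₂ - B₁ᵀ * B₁) := by
    rw [hC, hC, smul_sub]
    abel
  have e2 : B₂ᵀ * B₂ - B₁ᵀ * B₁ = B₂ᵀ * (B₂ - B₁) + (B₂ - B₁)ᵀ * B₁ := by
    rw [Matrix.transpose_sub, Matrix.mul_sub, Matrix.sub_mul]
    abel
  have hE : specNorm (B₂ - B₁) = specNorm (B₁ - B₂) := by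
    rw [show B₂ - B₁ = -(B₁ - B₂) by abel, specNorm_neg]
  have hB₁le : specNorm B₁ ≤ specNorm A := specNorm_mulOrth_le A h₁
  have hB₂le : specNorm B₂ ≤ specNorm A := specNorm_mulOrth_le A h₂
  have hE0 : 0 ≤ specNorm (B₁ - B₂) := specNorm_nonneg _
  have hA0 : 0 ≤ specNorm A := specNorm_nonneg _
  rw [e1, specNorm_smul, abs_of_nonneg hτ, e2]
  calc τ * specNorm (B₂ᵀ * (B₂ - B₁) + (B₂ - B₁)ᵀ * B₁)
      ≤ τ * (specNorm (B₂ᵀ * (B₂ - B₁)) + specNorm ((B₂ - B₁)ᵀ * B₁)) := by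
        apply mul_le_mul_of_nonneg_left (specNorm_add_le _ _) hτ
    _ ≤ τ * (specNorm A * specNorm (B₁ - B₂) + specNorm (B₁ - B₂) * specNorm A) := by
        apply mul_le_mul_of_nonneg_left _ hτ
        apply add_le_add
        · calc specNorm (B₂ᵀ * (B₂ - B₁)) ≤ specNorm B₂ᵀ * specNorm (B₂ - B₁) :=
              specNorm_mul_le _ _
            _ ≤ specNorm A * specNorm (B₁ - B₂) := by
                rw [specNorm_transpose, hE]
                exact mul_le_mul_of_nonneg_right hB₂le hE0
        · calc specNorm ((B₂ - B₁)ᵀ * B₁) ≤ specNorm (B₂ - B₁)ᵀ * specNorm B₁ :=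
              specNorm_mul_le _ _
            _ ≤ specNorm (B₁ - B₂) * specNorm A := by
                rw [specNorm_transpose, hE]
                exact mul_le_mul_of_nonneg_left hB₁le hE0
    _ = 2 * τ * specNorm A * specNorm (B₁ - B₂) := by ring

lemma KL_succ {n N m : ℕ} (A : Matrix (Fin n) (Fin N) ℝ) (τ : ℝ)
    (Y : Matrix (Fin n) (Fin m) ℝ) {l : ℕ} (hl : 1 ≤ l) :
    KL A τ Y (l + 1) = specNorm (1 - τ • (Aᵀ * A)) * KL A τ Y l
      + τ * frobNorm Y * (1 + 2 * τ * specNorm A ^ 2 *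
          ∑ k ∈ Finset.range l, specNorm (1 - τ • (Aᵀ * A)) ^ k) := by
  set ρ := specNorm (1 - τ • (Aᵀ * A)) with hρ
  set α := specNorm A with hα
  set F := frobNorm Y with hF
  unfold KL
  rw [Finset.sum_Icc_succ_top (by omega : 2 ≤ l + 1)]
  have h1 : (l + 1) - 1 = (l - 1) + 1 := by omega
  have h2 : ρ ^ ((l + 1) - 1) = ρ * ρ ^ (l - 1) := by rw [h1, pow_succ']
  have h3 : ∑ j ∈ Finset.Icc 2 l, ρ ^ ((l + 1) - j) *
        (1 + 2 * τ * α ^ 2 * ∑ k ∈ Finset.range (j - 1), ρ ^ k)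
      = ρ * ∑ j ∈ Finset.Icc 2 l, ρ ^ (l - j) *
        (1 + 2 * τ * α ^ 2 * ∑ k ∈ Finset.range (j - 1), ρ ^ k) := by
    rw [Finset.mul_sum]
    refine Finset.sum_congr rfl fun j hj => ?_
    have hjl : j ≤ l := (Finset.mem_Icc.mp hj).2
    have : (l + 1) - j = (l - j) + 1 := by omega
    rw [this, pow_succ']
    ring
  rw [h2, h3]
  have h4 : (l + 1) - (l + 1) = 0 := by omega
  have h5 : (l + 1) - 1 = l := by omega
  rw [h4, h5]
  ring
lemma main_ind {n N m : ℕ} (A : Matrix (Fin n) (Fin N) ℝ) {τ lam : ℝ}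
    (hτ : 0 ≤ τ) (hlam : 0 ≤ lam) (Y : Matrix (Fin n) (Fin m) ℝ)
    {Φ₁ Φ₂ : Matrix (Fin N) (Fin N) ℝ} (hΦ₁ : Φ₁ᵀ * Φ₁ = 1) (hΦ₂ : Φ₂ᵀ * Φ₂ = 1) :
    ∀ L : ℕ, 1 ≤ L →
      frobNorm (ista A τ lam Φ₁ Y L - ista A τ lam Φ₂ Y L) ≤
        KL A τ Y L * specNorm (A * Φ₁ - A * Φ₂) := by
  have hmu : 0 ≤ τ * lam := mul_nonneg hτ hlam
  set ρ := specNorm (1 - τ • (Aᵀ * A)) with hρdef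
  set α := specNorm A with hαdef
  set F := frobNorm Y with hFdef
  set E := specNorm (A * Φ₁ - A * Φ₂) with hEdef
  have hρ0 : 0 ≤ ρ := specNorm_nonneg _
  have hα0 : 0 ≤ α := specNorm_nonneg _
  have hF0 : 0 ≤ F := frobNorm_nonneg _
  have hE0 : 0 ≤ E := specNorm_nonneg _
  have hdiff : ∀ l : ℕ, frobNorm (τ • ((A * Φ₁)ᵀ * Y) - τ • ((A * Φ₂)ᵀ * Y)) ≤ τ * E * F := by
    intro l
    have e : τ • ((A * Φ₁)ᵀ * Y) - τ • ((A * Φ₂)ᵀ * Y) = τ • ((A * Φ₁ - A * Φ₂)ᵀ * Y) := by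
      rw [Matrix.transpose_sub, Matrix.sub_mul, smul_sub]
    rw [e, frobNorm_smul, abs_of_nonneg hτ]
    calc τ * frobNorm ((A * Φ₁ - A * Φ₂)ᵀ * Y)
        ≤ τ * (specNorm (A * Φ₁ - A * Φ₂)ᵀ * F) :=
          mul_le_mul_of_nonneg_left (frobNorm_mul_le _ _) hτ
      _ = τ * E * F := by rw [specNorm_transpose]; ring
  refine Nat.le_induction ?_ ?_
  · -- base case L = 1
    have e : ∀ Φ : Matrix (Fin N) (Fin N) ℝ,
        ista A τ lam Φ Y 1 = softMat (τ * lam) (τ • ((A * Φ)ᵀ * Y)) := by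
      intro Φ
      show softMat (τ * lam) ((1 - τ • (Φᵀ * Aᵀ * A * Φ)) * (0 : Matrix (Fin N) (Fin m) ℝ)
        + τ • ((A * Φ)ᵀ * Y)) = _
      rw [Matrix.mul_zero, zero_add]
    rw [e Φ₁, e Φ₂]
    have hKL1 : KL A τ Y 1 = τ * F := by
      unfold KL
      rw [show (1:ℕ) - 1 = 0 from rfl, pow_zero,
        Finset.Icc_eq_empty (by omega), Finset.sum_empty]
      ring
    calc frobNorm (softMat (τ * lam) (τ • ((A * Φ₁)ᵀ * Y))
          - softMat (τ * lam) (τ • ((A * Φ₂)ᵀ * Y)))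
        ≤ frobNorm (τ • ((A * Φ₁)ᵀ * Y) - τ • ((A * Φ₂)ᵀ * Y)) := softMat_lip hmu _ _
      _ ≤ τ * E * F := hdiff 1
      _ = KL A τ Y 1 * E := by rw [hKL1]; ring
  · -- inductive step
    intro l hl ih
    have hKL0 : 0 ≤ KL A τ Y l * E := le_trans (frobNorm_nonneg _) ih
    set u₁ := ista A τ lam Φ₁ Y l with hu₁
    set u₂ := ista A τ lam Φ₂ Y l with hu₂
    set W₁ := 1 - τ • (Φ₁ᵀ * Aᵀ * A * Φ₁) with hW₁
    set W₂ := 1 - τ • (Φ₂ᵀ * Aᵀ * A * Φ₂) with hW₂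
    have key : ∀ (Wa Wb : Matrix (Fin N) (Fin N) ℝ) (ua ub ta tb : Matrix (Fin N) (Fin m) ℝ),
        (Wa * ua + ta) - (Wb * ub + tb)
          = Wa * (ua - ub) + (Wa - Wb) * ub + (ta - tb) := by
      intro Wa Wb ua ub ta tb
      rw [Matrix.mul_sub, Matrix.sub_mul]
      abel
    have hsum0 : 0 ≤ ∑ k ∈ Finset.range l, ρ ^ k :=
      Finset.sum_nonneg fun k _ => pow_nonneg hρ0 k
    have step1 : frobNorm (W₁ * (u₁ - u₂)) ≤ ρ * (KL A τ Y l * E) := by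
      calc frobNorm (W₁ * (u₁ - u₂)) ≤ specNorm W₁ * frobNorm (u₁ - u₂) :=
            frobNorm_mul_le _ _
        _ ≤ ρ * (KL A τ Y l * E) :=
            mul_le_mul (specNorm_conj_le A τ hΦ₁) ih (frobNorm_nonneg _) hρ0
    have step2 : frobNorm ((W₁ - W₂) * u₂) ≤
        (2 * τ * α * E) * (τ * α * F * ∑ k ∈ Finset.range l, ρ ^ k) := by
      calc frobNorm ((W₁ - W₂) * u₂) ≤ specNorm (W₁ - W₂) * frobNorm u₂ :=
            frobNorm_mul_le _ _
        _ ≤ (2 * τ * α * E) * (τ * α * F * ∑ k ∈ Finset.range l, ρ ^ k) := by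
            apply mul_le_mul (W_diff_le A hτ hΦ₁ hΦ₂)
              (ista_frob_le A hτ hlam Y hΦ₂ l) (frobNorm_nonneg _)
            positivity
    calc frobNorm (ista A τ lam Φ₁ Y (l + 1) - ista A τ lam Φ₂ Y (l + 1))
        ≤ frobNorm ((W₁ * u₁ + τ • ((A * Φ₁)ᵀ * Y)) - (W₂ * u₂ + τ • ((A * Φ₂)ᵀ * Y))) :=
          softMat_lip hmu _ _
      _ = frobNorm (W₁ * (u₁ - u₂) + (W₁ - W₂) * u₂
          + (τ • ((A * Φ₁)ᵀ * Y) - τ • ((A * Φ₂)ᵀ * Y))) := by rw [key W₁ W₂ u₁ u₂]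
      _ ≤ frobNorm (W₁ * (u₁ - u₂) + (W₁ - W₂) * u₂)
          + frobNorm (τ • ((A * Φ₁)ᵀ * Y) - τ • ((A * Φ₂)ᵀ * Y)) := frobNorm_add_le _ _
      _ ≤ (frobNorm (W₁ * (u₁ - u₂)) + frobNorm ((W₁ - W₂) * u₂))
          + frobNorm (τ • ((A * Φ₁)ᵀ * Y) - τ • ((A * Φ₂)ᵀ * Y)) := by
            exact add_le_add_left (frobNorm_add_le _ _) _
      _ ≤ (ρ * (KL A τ Y l * E)
          + (2 * τ * α * E) * (τ * α * F * ∑ k ∈ Finset.range l, ρ ^ k)) + τ * E * F := by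
            exact add_le_add (add_le_add step1 step2) (hdiff l)
      _ = KL A τ Y (l + 1) * E := by
            rw [KL_succ A τ Y hl]
            ring

theorem statement6 {n N m : ℕ} (A : Matrix (Fin n) (Fin N) ℝ)
    (τ lam : ℝ) (hτ : 0 < τ) (hlam : 0 < lam)
    (Y : Matrix (Fin n) (Fin m) ℝ) (L : ℕ) (hL : 2 ≤ L)
    (Φ₁ Φ₂ : Matrix (Fin N) (Fin N) ℝ) (hΦ₁ : IsOrthogonal Φ₁) (hΦ₂ : IsOrthogonal Φ₂) :
    frobNorm (ista A τ lam Φ₁ Y L - ista A τ lam Φ₂ Y L) ≤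
      KL A τ Y L * specNorm (A * Φ₁ - A * Φ₂) := by
  exact main_ind A hτ.le hlam.le Y hΦ₁ hΦ₂ L (by omega)
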